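/- For spaces F and B and a fibration F → E → B, the Lusternik–Schnirelmann category satisfies cat(E) + 1 ≤ (cat(F) + 1)·(cat(B) + 1). -/

import Mathlib

/- STATEMENT 3 (Varadarajan, Hardie): for a (Hurewicz) fibration F → E → B,
cat(E) + 1 ≤ (cat(F)+1)·(cat(B)+1), where cat is the Lusternik–Schnirelmann category:
the least m such that the space admits an open cover by m+1 sets each contractible in it. -/

open unitInterval

/-- A subset `U` of `X` is contractible in `X`: the inclusion is null-homotopic. -/
def ContractibleInSpace {X : Type} [TopologicalSpace X] (U : Set X) : Prop :=
  ∃ x₀ : X, (ContinuousMap.mk (Subtype.val : U → X)).Homotopic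
    (ContinuousMap.const U x₀)

/-- `LSCatLE X m`: `X` is covered by `m+1` open subsets, each contractible in `X`. -/
def LSCatLE (X : Type) [TopologicalSpace X] (m : ℕ) : Prop :=
  ∃ U : Fin (m + 1) → Set X, (∀ i, IsOpen (U i)) ∧ (⋃ i, U i) = Set.univ ∧
    ∀ i, ContractibleInSpace (U i)

/-- The Lusternik–Schnirelmann category of `X`, as an extended natural number. -/
noncomputable def LSCat (X : Type) [TopologicalSpace X] : ℕ∞ :=
  sInf {n : ℕ∞ | ∃ m : ℕ, n = m ∧ LSCatLE X m}

/-- `p : E → B` is a (Hurewicz) fibration: it has the homotopy lifting property with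
respect to all spaces. -/
def IsHurewiczFibration {E B : Type} [TopologicalSpace E] [TopologicalSpace B]
    (p : C(E, B)) : Prop :=
  ∀ (Y : Type) (_ : TopologicalSpace Y) (f : C(Y, E)) (H : C(Y × I, B)),
    (∀ y, H (y, 0) = p (f y)) →
      ∃ H' : C(Y × I, E), (∀ z, p (H' z) = H z) ∧ ∀ y, H' (y, 0) = f y

/-- Transport of `LSCatLE` along a homeomorphism. -/
lemma LSCatLE.of_homeo {X Y : Type} [TopologicalSpace X] [TopologicalSpace Y]
    (e : X ≃ₜ Y) {m : ℕ} (h : LSCatLE X m) : LSCatLE Y m := by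
  obtain ⟨U, hopen, hcov, hcon⟩ := h
  refine ⟨fun i => e.symm ⁻¹' U i, fun i => (hopen i).preimage e.symm.continuous, ?_, ?_⟩
  · rw [← Set.preimage_iUnion, hcov, Set.preimage_univ]
  · intro i
    obtain ⟨x₀, hx₀⟩ := hcon i
    refine ⟨e x₀, ?_⟩
    -- restriction of e.symm to V i
    set V : Set Y := e.symm ⁻¹' U i
    have hr : Continuous fun (y : V) => (⟨e.symm y.val, y.2⟩ : U i) :=
      Continuous.subtype_mk (e.symm.continuous.comp continuous_subtype_val) _
    let r : C(V, U i) := ⟨_, hr⟩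
    have key := ContinuousMap.Homotopic.comp
      (ContinuousMap.Homotopic.comp (ContinuousMap.Homotopic.refl (e : C(X, Y))) hx₀) (ContinuousMap.Homotopic.refl r)
    have h1 : ((e : C(X, Y)).comp (ContinuousMap.mk (Subtype.val : U i → X))).comp r
        = ContinuousMap.mk (Subtype.val : V → Y) := by
      ext y; exact e.apply_symm_apply y.val
    have h2 : ((e : C(X, Y)).comp (ContinuousMap.const (U i) x₀)).comp r
        = ContinuousMap.const V (e x₀) := by
      ext y; rfl
    rw [h1, h2] at key
    exact key

/-- Core deformation lemma: the preimage of an open set contractible in `B` deforms, inside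
`E`, into the fiber over `b`. -/
lemma deform_to_fiber {E B : Type} [TopologicalSpace E] [TopologicalSpace B]
    [PathConnectedSpace B] (p : C(E, B)) (hp : IsHurewiczFibration p) (b : B)
    {U : Set B} (hc : ContractibleInSpace U) :
    ∃ g : C((p ⁻¹' U : Set E), {e : E // p e = b}),
      (ContinuousMap.mk (Subtype.val : (p ⁻¹' U : Set E) → E)).Homotopic
        ((ContinuousMap.mk (Subtype.val : {e : E // p e = b} → E)).comp g) := by
  obtain ⟨b₀, hb₀⟩ := hc
  have hpath : Joined b₀ b := PathConnectedSpace.joined b₀ b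
  obtain ⟨γ⟩ := hpath
  have hhom : (ContinuousMap.mk (Subtype.val : U → B)).Homotopic (ContinuousMap.const U b) :=
    hb₀.trans ⟨γ.toHomotopyConst⟩
  obtain ⟨M⟩ := hhom
  set A : Set E := p ⁻¹' U with hA
  -- the homotopy to lift
  have hq : Continuous fun (z : A × I) => ((z.2, (⟨p z.1.val, z.1.2⟩ : U)) : I × U) := by
    refine Continuous.prodMk continuous_snd (Continuous.subtype_mk ?_ _)
    exact p.continuous.comp (continuous_subtype_val.comp continuous_fst)
  let H : C(A × I, B) := M.toContinuousMap.comp ⟨_, hq⟩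
  have hH0 : ∀ y : A, H (y, 0) = p ((ContinuousMap.mk (Subtype.val : A → E)) y) := by
    intro y
    exact M.map_zero_left ⟨p y.val, y.2⟩
  obtain ⟨H', hH'p, hH'0⟩ := hp A inferInstance (ContinuousMap.mk Subtype.val) H hH0
  have hg : ∀ y : A, p (H' (y, 1)) = b := by
    intro y
    rw [hH'p (y, 1)]
    exact M.map_one_left ⟨p y.val, y.2⟩
  refine ⟨⟨fun y => ⟨H' (y, 1), hg y⟩, Continuous.subtype_mk
    (H'.continuous.comp (continuous_id.prodMk continuous_const)) _⟩, ?_⟩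
  refine ⟨⟨⟨fun z => H' (z.2, z.1), H'.continuous.comp
    (continuous_snd.prodMk continuous_fst)⟩, ?_, ?_⟩⟩
  · intro x; exact hH'0 x
  · intro x; rfl

/-- The combination lemma giving the cover of the total space. -/
lemma LSCatLE_total {E B : Type} [TopologicalSpace E] [TopologicalSpace B]
    [PathConnectedSpace B] (p : C(E, B)) (hp : IsHurewiczFibration p) (b : B)
    {m n : ℕ} (hB : LSCatLE B m) (hFb : LSCatLE {e : E // p e = b} n) :
    LSCatLE E ((n + 1) * (m + 1) - 1) := by
  obtain ⟨U, hUopen, hUcov, hUcon⟩ := hB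
  obtain ⟨V, hVopen, hVcov, hVcon⟩ := hFb
  -- deformations
  choose g hg using fun i => deform_to_fiber p hp b (hUcon i)
  -- the (n+1)(m+1) sets
  let W : Fin (n + 1) × Fin (m + 1) → Set E := fun ji =>
    Subtype.val '' (⇑(g ji.2) ⁻¹' (V ji.1))
  have hWopen : ∀ ji, IsOpen (W ji) := by
    intro ji
    exact ((hUopen ji.2).preimage p.continuous).isOpenMap_subtype_val _
      ((hVopen ji.1).preimage (g ji.2).continuous)
  have hWcov : (⋃ ji, W ji) = Set.univ := by
    ext e
    simp only [Set.mem_iUnion, Set.mem_univ, iff_true]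
    have he : p e ∈ ⋃ i, U i := hUcov ▸ Set.mem_univ _
    obtain ⟨i, hi⟩ := Set.mem_iUnion.mp he
    have hgi : (g i ⟨e, hi⟩ : {e : E // p e = b}) ∈ ⋃ j, V j := hVcov ▸ Set.mem_univ _
    obtain ⟨j, hj⟩ := Set.mem_iUnion.mp hgi
    exact ⟨(j, i), ⟨⟨e, hi⟩, hj, rfl⟩⟩
  have hWcon : ∀ ji, ContractibleInSpace (W ji) := by
    rintro ⟨j, i⟩
    set A : Set E := p ⁻¹' U i
    set Wji : Set E := W (j, i)
    have hmemA : ∀ w : Wji, w.val ∈ A := by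
      rintro ⟨w, a, ha, rfl⟩
      exact a.2
    have hr : Continuous fun (w : Wji) => (⟨w.val, hmemA w⟩ : A) :=
      Continuous.subtype_mk continuous_subtype_val _
    let r : C(Wji, A) := ⟨_, hr⟩
    have hmemV : ∀ w : Wji, (g i (r w) : {e : E // p e = b}) ∈ V j := by
      rintro ⟨w, a, ha, rfl⟩
      have : r ⟨a.val, ⟨a, ha, rfl⟩⟩ = a := Subtype.ext rfl
      rw [this]
      exact ha
    have hqc : Continuous fun (w : Wji) => (⟨g i (r w), hmemV w⟩ : V j) :=
      Continuous.subtype_mk ((g i).continuous.comp hr) _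
    let q : C(Wji, (V j : Set {e : E // p e = b})) := ⟨_, hqc⟩
    let ι : C({e : E // p e = b}, E) := ContinuousMap.mk Subtype.val
    -- first homotopy: incl_W ≃ ι ∘ g i ∘ r
    have key1 := ContinuousMap.Homotopic.comp (hg i) (ContinuousMap.Homotopic.refl r)
    have e1 : (ContinuousMap.mk (Subtype.val : A → E)).comp r
        = ContinuousMap.mk (Subtype.val : Wji → E) := by ext w; rfl
    rw [e1] at key1
    -- rewrite target through V j
    obtain ⟨x₀, hx₀⟩ := hVcon j
    have key2 := ContinuousMap.Homotopic.comp
      (ContinuousMap.Homotopic.comp (ContinuousMap.Homotopic.refl ι) hx₀) (ContinuousMap.Homotopic.refl q)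
    have e2 : (ι.comp (ContinuousMap.mk (Subtype.val : ↑(V j) → {e : E // p e = b}))).comp q
        = (ι.comp (g i)).comp r := by ext w; rfl
    have e3 : (ι.comp (ContinuousMap.const ↑(V j) x₀)).comp q
        = ContinuousMap.const Wji (ι x₀) := by ext w; rfl
    rw [e2, e3] at key2
    exact ⟨ι x₀, key1.trans key2⟩
  -- reindex
  have hcard : (n + 1) * (m + 1) - 1 + 1 = (n + 1) * (m + 1) := by
    have : 0 < (n + 1) * (m + 1) := Nat.mul_pos (Nat.succ_pos n) (Nat.succ_pos m)
    omega
  let eq1 : Fin ((n + 1) * (m + 1) - 1 + 1) ≃ Fin (n + 1) × Fin (m + 1) :=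
    (finCongr hcard).trans finProdFinEquiv.symm
  refine ⟨fun k => W (eq1 k), fun k => hWopen _, ?_, fun k => hWcon _⟩
  rw [← hWcov]
  exact eq1.surjective.iUnion_comp W

/-- If `LSCat X` is finite it is attained. -/
lemma LSCat_attained (X : Type) [TopologicalSpace X] (h : LSCat X ≠ ⊤) :
    ∃ m : ℕ, LSCat X = m ∧ LSCatLE X m := by
  have hne : {n : ℕ∞ | ∃ m : ℕ, n = m ∧ LSCatLE X m}.Nonempty := by
    by_contra hc
    rw [Set.not_nonempty_iff_eq_empty] at hc
    exact h (by rw [LSCat, hc, sInf_empty])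
  obtain ⟨_, k, rfl, hk⟩ := hne
  have hT : {m : ℕ | LSCatLE X m}.Nonempty := ⟨k, hk⟩
  refine ⟨sInf {m : ℕ | LSCatLE X m}, ?_, Nat.sInf_mem hT⟩
  apply le_antisymm
  · exact sInf_le ⟨_, rfl, Nat.sInf_mem hT⟩
  · apply le_sInf
    rintro _ ⟨m, rfl, hm⟩
    exact_mod_cast Nat.sInf_le hm

theorem stmt3 {E B : Type} [TopologicalSpace E] [TopologicalSpace B]
    [PathConnectedSpace B] (p : C(E, B)) (hp : IsHurewiczFibration p)
    (hsurj : Function.Surjective p) (b : B) (F : Type) [TopologicalSpace F]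
    (hF : Nonempty (F ≃ₜ {e : E // p e = b})) :
    LSCat E + 1 ≤ (LSCat F + 1) * (LSCat B + 1) := by
  obtain ⟨φ⟩ := hF
  by_cases hFt : LSCat F = ⊤
  · rw [hFt, top_add, ENat.top_mul (by simp [← ENat.one_le_iff_ne_zero, le_add_self] :
      LSCat B + 1 ≠ 0)]
    exact le_top
  by_cases hBt : LSCat B = ⊤
  · rw [hBt, top_add, ENat.mul_top (by simp [← ENat.one_le_iff_ne_zero, le_add_self] :
      LSCat F + 1 ≠ 0)]
    exact le_top
  obtain ⟨n, hn, hFle⟩ := LSCat_attained F hFt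
  obtain ⟨m, hm, hBle⟩ := LSCat_attained B hBt
  have hFb : LSCatLE {e : E // p e = b} n := hFle.of_homeo φ
  have hE : LSCatLE E ((n + 1) * (m + 1) - 1) := LSCatLE_total p hp b hBle hFb
  have hle : LSCat E ≤ (((n + 1) * (m + 1) - 1 : ℕ) : ℕ∞) := sInf_le ⟨_, rfl, hE⟩
  have hcard : (n + 1) * (m + 1) - 1 + 1 = (n + 1) * (m + 1) := by
    have : 0 < (n + 1) * (m + 1) := Nat.mul_pos (Nat.succ_pos n) (Nat.succ_pos m)
    omega
  calc LSCat E + 1 ≤ (((n + 1) * (m + 1) - 1 : ℕ) : ℕ∞) + 1 := add_le_add_left hle 1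
    _ = (((n + 1) * (m + 1) : ℕ) : ℕ∞) := by rw [← hcard]; push_cast; ring
    _ = (LSCat F + 1) * (LSCat B + 1) := by rw [hn, hm]; push_cast; ring
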